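/- Suppose A·V - E·V·S_v + B·R = 0 and W ∈ ℂ^{n×r} with W^T E V invertible. Define the reduced system E_r = W^T E V, A_r = W^T A V, B_r = W^T B, C_r = C V. If the full system E ẋ = A x + B u, y = C x is initialized at x(0) = V x₀ and the reduced system E_r ẋ_r = A_r x_r + B_r u, y_r = C_r x_r is initialized at x_r(0) = x₀, and both are driven by u(t) = R e^{S_v t} x₀, then y(t) = y_r(t) for all t. (In fact x(t) = V x_r(t) with x_r(t) = e^{S_v t} x₀.) -/

import Mathlib

open Matrix

attribute [local instance] Matrix.linftyOpNormedRing Matrix.linftyOpNormedAlgebra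
attribute [local instance] Matrix.linftyOpNormedAddCommGroup Matrix.linftyOpNormedSpace


lemma MM.hasDerivAt_entry {k l : ℕ} {F : ℝ → Matrix (Fin k) (Fin l) ℂ}
    {F' : Matrix (Fin k) (Fin l) ℂ} {t : ℝ} (hF : HasDerivAt F F' t) (i : Fin k) (j : Fin l) :
    HasDerivAt (fun s => F s i j) (F' i j) t :=
  ((LinearMap.toContinuousLinearMap
    (Matrix.entryLinearMap ℂ ℂ i j)).restrictScalars ℝ).hasFDerivAt.comp_hasDerivAt t hF

lemma MM.hasDerivAt_mulVec {k l : ℕ} {F : ℝ → Matrix (Fin k) (Fin l) ℂ}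
    {F' : Matrix (Fin k) (Fin l) ℂ} {g : ℝ → Fin l → ℂ} {g' : Fin l → ℂ} {t : ℝ}
    (hF : HasDerivAt F F' t) (hg : HasDerivAt g g' t) :
    HasDerivAt (fun s => (F s).mulVec (g s)) (F'.mulVec (g t) + (F t).mulVec g') t := by
  rw [hasDerivAt_pi]
  intro i
  have : ∀ s : ℝ, (F s).mulVec (g s) i = ∑ j, F s i j * g s j := by
    intro s; simp [Matrix.mulVec, dotProduct]
  simp only [this]
  have hsum : HasDerivAt (fun s => ∑ j, F s i j * g s j)
      (∑ j, (F' i j * g t j + F t i j * g' j)) t := by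
    apply HasDerivAt.fun_sum
    intro j _
    exact (MM.hasDerivAt_entry hF i j).mul (hasDerivAt_pi.mp hg j)
  refine hsum.congr_deriv ?_
  simp [Matrix.mulVec, dotProduct, Finset.sum_add_distrib]

lemma MM.hasDerivAt_exp {k : ℕ} (M : Matrix (Fin k) (Fin k) ℂ) (t : ℝ) :
    HasDerivAt (fun s : ℝ => NormedSpace.exp ((s : ℂ) • M))
      (NormedSpace.exp ((t : ℂ) • M) * M) t := by
  have h := hasDerivAt_exp_smul_const M (t : ℂ)
  have h2 := h.scomp t Complex.ofRealCLM.hasDerivAt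
  simp only [Complex.ofRealCLM_apply, ContinuousLinearMap.one_apply, one_smul, Complex.real_smul, mul_one, Complex.ofReal_one] at h2
  exact h2

lemma MM.ode_zero {k : ℕ} (M : Matrix (Fin k) (Fin k) ℂ) (h : ℝ → Fin k → ℂ)
    (hd : ∀ t, HasDerivAt h (M.mulVec (h t)) t) (h0 : h 0 = 0) : ∀ t, h t = 0 := by
  set F : ℝ → Matrix (Fin k) (Fin k) ℂ := fun s => NormedSpace.exp ((s : ℂ) • (-M)) with hFdef
  have hF : ∀ t, HasDerivAt F (F t * (-M)) t := fun t => MM.hasDerivAt_exp (-M) t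
  have key : ∀ t, HasDerivAt (fun s => (F s).mulVec (h s)) 0 t := by
    intro t
    have := MM.hasDerivAt_mulVec (hF t) (hd t)
    convert this using 1
    rw [Matrix.mulVec_mulVec, ← Matrix.add_mulVec, Matrix.mul_neg, neg_add_cancel,
      Matrix.zero_mulVec]
  have hconst : ∀ t, (F t).mulVec (h t) = (F 0).mulVec (h 0) := by
    intro t
    exact is_const_of_deriv_eq_zero (fun s => ((key s).differentiableAt))
      (fun s => (key s).deriv) t 0
  have hzero : ∀ t, (F t).mulVec (h t) = 0 := by
    intro t; rw [hconst t, h0, Matrix.mulVec_zero]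
  intro t
  have hcomm : Commute ((t : ℂ) • M) ((t : ℂ) • (-M)) :=
    (((Commute.refl M).neg_right).smul_left _).smul_right _
  have hinv : NormedSpace.exp ((t : ℂ) • M) * F t = 1 := by
    rw [hFdef]
    beta_reduce
    refine (NormedSpace.exp_add_of_commute hcomm).symm.trans ?_
    simp
  calc h t = (NormedSpace.exp ((t : ℂ) • M) * F t).mulVec (h t) := by
        rw [hinv, Matrix.one_mulVec]
    _ = (NormedSpace.exp ((t : ℂ) • M)).mulVec ((F t).mulVec (h t)) := by
        rw [Matrix.mulVec_mulVec]
    _ = 0 := by rw [hzero t, Matrix.mulVec_zero]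

/-- uniqueness wrapper -/
lemma MM.ode_unique {k : ℕ} (M : Matrix (Fin k) (Fin k) ℂ) (a b : ℝ → Fin k → ℂ)
    (a' b' : ℝ → Fin k → ℂ)
    (ha : ∀ t, HasDerivAt a (a' t) t) (hb : ∀ t, HasDerivAt b (b' t) t)
    (hab : ∀ t, a' t - b' t = M.mulVec (a t - b t)) (h0 : a 0 = b 0) : ∀ t, a t = b t := by
  intro t
  have hz := MM.ode_zero M (fun s => a s - b s)
    (fun s => (hab s) ▸ ((ha s).sub (hb s))) (sub_eq_zero_of_eq h0) t
  exact sub_eq_zero.mp hz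

/-- Linear moment matching: if `A V - E V S_v + B R = 0` and `WᵀEV` is invertible, then
the full model started at `x(0) = V x₀` and the reduced model started at `x_r(0) = x₀`,
both driven by `u(t) = R e^{S_v t} x₀`, have identical outputs; in fact
`x(t) = V x_r(t)` with `x_r(t) = e^{S_v t} x₀`. -/
theorem linear_moment_matching_exact (n m p r : ℕ)
    (E A : Matrix (Fin n) (Fin n) ℂ) (hE : IsUnit E)
    (B : Matrix (Fin n) (Fin m) ℂ) (C : Matrix (Fin p) (Fin n) ℂ)
    (V W : Matrix (Fin n) (Fin r) ℂ)
    (Sv : Matrix (Fin r) (Fin r) ℂ) (R : Matrix (Fin m) (Fin r) ℂ)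
    (x₀ : Fin r → ℂ)
    (hSyl : A * V - E * V * Sv + B * R = 0)
    (hWEV : IsUnit (W.transpose * E * V))
    (u : ℝ → Fin m → ℂ)
    (hu : ∀ t : ℝ, u t = (R * NormedSpace.exp ((t : ℂ) • Sv)).mulVec x₀)
    (x x' : ℝ → Fin n → ℂ)
    (hx : ∀ t : ℝ, HasDerivAt x (x' t) t)
    (hxeq : ∀ t : ℝ, E.mulVec (x' t) = A.mulVec (x t) + B.mulVec (u t))
    (hx0 : x 0 = V.mulVec x₀)
    (xr xr' : ℝ → Fin r → ℂ)
    (hxr : ∀ t : ℝ, HasDerivAt xr (xr' t) t)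
    (hxreq : ∀ t : ℝ, (W.transpose * E * V).mulVec (xr' t) =
      (W.transpose * A * V).mulVec (xr t) + (W.transpose * B).mulVec (u t))
    (hxr0 : xr 0 = x₀) :
    ∀ t : ℝ, C.mulVec (x t) = (C * V).mulVec (xr t) ∧
      x t = V.mulVec (xr t) ∧
      xr t = (NormedSpace.exp ((t : ℂ) • Sv)).mulVec x₀ := by
  -- the explicit solution, made opaque
  obtain ⟨z, hz0, hz, hRz⟩ : ∃ z : ℝ → Fin r → ℂ, z 0 = x₀ ∧
      (∀ t, HasDerivAt z (Sv.mulVec (z t)) t) ∧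
      (∀ t, z t = (NormedSpace.exp ((t : ℂ) • Sv)).mulVec x₀) := by
    refine ⟨fun t => (NormedSpace.exp ((t : ℂ) • Sv)).mulVec x₀, by simp, ?_, fun _ => rfl⟩
    intro t
    have h1 := MM.hasDerivAt_mulVec (MM.hasDerivAt_exp Sv t) (hasDerivAt_const t x₀)
    simp only [Matrix.mulVec_zero, add_zero] at h1
    have hc : Commute (NormedSpace.exp ((t : ℂ) • Sv)) Sv :=
      (((Commute.refl Sv).smul_left ((t : ℂ)))).exp_left
    have h2 : (NormedSpace.exp ((t : ℂ) • Sv) * Sv).mulVec x₀ =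
        Sv.mulVec ((NormedSpace.exp ((t : ℂ) • Sv)).mulVec x₀) := by
      rw [hc.eq]
      exact (Matrix.mulVec_mulVec _ _ _).symm
    rw [h2] at h1
    exact h1
  -- Sylvester rearranged
  have hsyl' : E * V * Sv = A * V + B * R := by
    have h1 : A * V + B * R - E * V * Sv = 0 := by rw [← sub_add_eq_add_sub]; exact hSyl
    exact (sub_eq_zero.mp h1).symm
  -- u in terms of z
  have huz : ∀ t, u t = R.mulVec (z t) := by
    intro t; rw [hu t, hRz t, Matrix.mulVec_mulVec]
  -- invertibility facts
  have hEdet : IsUnit E.det := (Matrix.isUnit_iff_isUnit_det E).mp hE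
  have hGdet : IsUnit (W.transpose * E * V).det :=
    (Matrix.isUnit_iff_isUnit_det _).mp hWEV
  -- the reduced solution agrees with z
  have hxrz : ∀ t, xr t = z t := by
    apply MM.ode_unique ((W.transpose * E * V)⁻¹ * (W.transpose * A * V)) xr z xr'
      (fun t => Sv.mulVec (z t)) hxr hz _ (by rw [hxr0, hz0])
    intro t
    have hGSv : W.transpose * E * V * Sv = W.transpose * A * V + W.transpose * B * R := by
      calc W.transpose * E * V * Sv = W.transpose * (E * V * Sv) := by
            rw [Matrix.mul_assoc, Matrix.mul_assoc, Matrix.mul_assoc]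
        _ = W.transpose * (A * V + B * R) := by rw [hsyl']
        _ = W.transpose * A * V + W.transpose * B * R := by
            rw [Matrix.mul_add, ← Matrix.mul_assoc, ← Matrix.mul_assoc]
    have hkey : (W.transpose * E * V).mulVec (xr' t - Sv.mulVec (z t)) =
        (W.transpose * A * V).mulVec (xr t - z t) := by
      have hGz : (W.transpose * E * V).mulVec (Sv.mulVec (z t)) =
          (W.transpose * A * V).mulVec (z t) + (W.transpose * B).mulVec (R.mulVec (z t)) := by
        calc (W.transpose * E * V).mulVec (Sv.mulVec (z t))
            = (W.transpose * E * V * Sv).mulVec (z t) := Matrix.mulVec_mulVec _ _ _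
          _ = (W.transpose * A * V + W.transpose * B * R).mulVec (z t) := by rw [hGSv]
          _ = (W.transpose * A * V).mulVec (z t) + (W.transpose * B * R).mulVec (z t) :=
              Matrix.add_mulVec _ _ _
          _ = (W.transpose * A * V).mulVec (z t) + (W.transpose * B).mulVec (R.mulVec (z t)) := by
              rw [Matrix.mulVec_mulVec]
      rw [Matrix.mulVec_sub, hxreq t, huz t, hGz, Matrix.mulVec_sub]
      abel
    calc xr' t - Sv.mulVec (z t)
        = ((W.transpose * E * V)⁻¹ * (W.transpose * E * V)).mulVec
            (xr' t - Sv.mulVec (z t)) := by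
          rw [Matrix.nonsing_inv_mul _ hGdet, Matrix.one_mulVec]
      _ = ((W.transpose * E * V)⁻¹).mulVec ((W.transpose * E * V).mulVec
            (xr' t - Sv.mulVec (z t))) := (Matrix.mulVec_mulVec _ _ _).symm
      _ = ((W.transpose * E * V)⁻¹).mulVec ((W.transpose * A * V).mulVec (xr t - z t)) := by
          rw [hkey]
      _ = ((W.transpose * E * V)⁻¹ * (W.transpose * A * V)).mulVec (xr t - z t) :=
          Matrix.mulVec_mulVec _ _ _
  -- the full solution agrees with V z
  have hxz : ∀ t, x t = V.mulVec (z t) := by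
    apply MM.ode_unique (E⁻¹ * A) x (fun s => V.mulVec (z s)) x'
      (fun t => V.mulVec (Sv.mulVec (z t))) hx
      (fun t => by simpa using MM.hasDerivAt_mulVec (hasDerivAt_const t V) (hz t)) _
      (by show x 0 = V.mulVec (z 0); rw [hx0, hz0])
    intro t
    have hkey : E.mulVec (x' t - V.mulVec (Sv.mulVec (z t))) =
        A.mulVec (x t - V.mulVec (z t)) := by
      have hEz : E.mulVec (V.mulVec (Sv.mulVec (z t))) =
          A.mulVec (V.mulVec (z t)) + B.mulVec (R.mulVec (z t)) := by
        calc E.mulVec (V.mulVec (Sv.mulVec (z t)))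
            = (E * V).mulVec (Sv.mulVec (z t)) := Matrix.mulVec_mulVec _ _ _
          _ = (E * V * Sv).mulVec (z t) := Matrix.mulVec_mulVec _ _ _
          _ = (A * V + B * R).mulVec (z t) := by rw [hsyl']
          _ = (A * V).mulVec (z t) + (B * R).mulVec (z t) := Matrix.add_mulVec _ _ _
          _ = A.mulVec (V.mulVec (z t)) + B.mulVec (R.mulVec (z t)) := by
              rw [Matrix.mulVec_mulVec, Matrix.mulVec_mulVec]
      rw [Matrix.mulVec_sub, hxeq t, huz t, hEz, Matrix.mulVec_sub]
      abel
    calc x' t - V.mulVec (Sv.mulVec (z t))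
        = (E⁻¹ * E).mulVec (x' t - V.mulVec (Sv.mulVec (z t))) := by
          rw [Matrix.nonsing_inv_mul _ hEdet, Matrix.one_mulVec]
      _ = E⁻¹.mulVec (E.mulVec (x' t - V.mulVec (Sv.mulVec (z t)))) :=
          (Matrix.mulVec_mulVec _ _ _).symm
      _ = E⁻¹.mulVec (A.mulVec (x t - V.mulVec (z t))) := by rw [hkey]
      _ = (E⁻¹ * A).mulVec (x t - V.mulVec (z t)) := Matrix.mulVec_mulVec _ _ _
  intro t
  refine ⟨?_, ?_, ?_⟩
  · rw [hxz t, ← hxrz t, Matrix.mulVec_mulVec]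
  · rw [hxz t, hxrz t]
  · rw [hxrz t, hRz t]
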